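/- Let (Σ,μ) be a measure space, 1 ≤ p < ∞, Y a Banach space, and Ω : L_p(μ) → Y a quasi-linear map with quasi-linearity constant Z(Ω). Let A and B be disjoint measurable subsets of Σ. If Ω is c-trivial on L_p(A) and d-trivial on L_p(B), then Ω is 2(Z(Ω)+c+d)-trivial on L_p(A ∪ B). -/

import Mathlib

open MeasureTheory
open scoped ENNReal

noncomputable section

section Defs

variable {X Y : Type*} [NormedAddCommGroup X] [NormedSpace ℝ X]
  [NormedAddCommGroup Y] [NormedSpace ℝ Y]

/-- `Ω` is `C`-trivial on the subspace `E`: some (possibly discontinuous) linear map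
`L : E → Y` is at distance at most `C` from `Ω` on `E`. -/
def TrivialOnWith (Ω : X → Y) (E : Submodule ℝ X) (C : ℝ) : Prop :=
  ∃ L : E →ₗ[ℝ] Y, ∀ x : E, ‖Ω x - L x‖ ≤ C * ‖(x : X)‖

end Defs

/-- The subspace `L_p(A)` of `L_p(μ)` of functions supported a.e. in `A`. -/
def LpSubspace {α : Type*} [MeasurableSpace α] (q : ℝ≥0∞) (μ : Measure α) (A : Set α) :
    Submodule ℝ (Lp ℝ q μ) where
  carrier := {f | ∀ᵐ a ∂μ, a ∉ A → f a = 0}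
  zero_mem' := by
    filter_upwards [Lp.coeFn_zero ℝ q μ] with a ha using fun _ => by simpa using ha
  add_mem' := by
    intro f g hf hg
    filter_upwards [hf, hg, Lp.coeFn_add f g] with a hfa hga hadd h
    simp only [hadd, Pi.add_apply, hfa h, hga h, add_zero]
  smul_mem' := by
    intro c f hf
    filter_upwards [hf, Lp.coeFn_smul c f] with a hfa hs h
    simp only [hs, Pi.smul_apply, hfa h, smul_eq_mul, mul_zero]

/-- Multiplication by the indicator of a measurable set, as a linear map on `Lp`. -/
def indLinear {α : Type*} [MeasurableSpace α] {μ : Measure α} {q : ℝ≥0∞} [Fact (1 ≤ q)]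
    {A : Set α} (hA : MeasurableSet A) : Lp ℝ q μ →ₗ[ℝ] Lp ℝ q μ where
  toFun f := ((Lp.memLp f).indicator hA).toLp (A.indicator f)
  map_add' f g := by
    apply Lp.ext
    filter_upwards [MemLp.coeFn_toLp (E := ℝ) (((Lp.memLp (f + g))).indicator hA),
      MemLp.coeFn_toLp (E := ℝ) ((Lp.memLp f).indicator hA),
      MemLp.coeFn_toLp (E := ℝ) ((Lp.memLp g).indicator hA),
      Lp.coeFn_add f g,
      Lp.coeFn_add (((Lp.memLp f).indicator hA).toLp (A.indicator f))
        (((Lp.memLp g).indicator hA).toLp (A.indicator g))] with a h1 h2 h3 h4 h5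
    rw [h1, h5, Pi.add_apply, h2, h3]
    by_cases ha : a ∈ A
    · simp only [Set.indicator_of_mem ha, h4, Pi.add_apply]
    · simp [Set.indicator_of_notMem ha]
  map_smul' r f := by
    apply Lp.ext
    filter_upwards [MemLp.coeFn_toLp (E := ℝ) ((Lp.memLp (r • f)).indicator hA),
      MemLp.coeFn_toLp (E := ℝ) ((Lp.memLp f).indicator hA),
      Lp.coeFn_smul r f,
      Lp.coeFn_smul r (((Lp.memLp f).indicator hA).toLp (A.indicator f))] with a h1 h2 h3 h4
    rw [h1, RingHom.id_apply, h4, Pi.smul_apply, h2]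
    by_cases ha : a ∈ A
    · simp only [Set.indicator_of_mem ha, h3, Pi.smul_apply]
    · simp [Set.indicator_of_notMem ha]

theorem indLinear_coeFn {α : Type*} [MeasurableSpace α] {μ : Measure α} {q : ℝ≥0∞}
    [Fact (1 ≤ q)] {A : Set α} (hA : MeasurableSet A) (f : Lp ℝ q μ) :
    (indLinear hA f : α → ℝ) =ᵐ[μ] A.indicator f :=
  MemLp.coeFn_toLp (E := ℝ) ((Lp.memLp f).indicator hA)

theorem indLinear_mem {α : Type*} [MeasurableSpace α] {μ : Measure α} {q : ℝ≥0∞} [Fact (1 ≤ q)]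
    {A : Set α} (hA : MeasurableSet A) (f : Lp ℝ q μ) :
    indLinear hA f ∈ LpSubspace q μ A := by
  filter_upwards [indLinear_coeFn hA f] with a h1 ha
  rw [h1, Set.indicator_of_notMem ha]

theorem indLinear_norm_le {α : Type*} [MeasurableSpace α] {μ : Measure α} {q : ℝ≥0∞}
    [Fact (1 ≤ q)] {A : Set α} (hA : MeasurableSet A) (f : Lp ℝ q μ) :
    ‖indLinear hA f‖ ≤ ‖f‖ := by
  apply Lp.norm_le_norm_of_ae_le
  filter_upwards [indLinear_coeFn hA f] with a h1
  rw [h1]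
  by_cases ha : a ∈ A
  · simp [Set.indicator_of_mem ha]
  · simp [Set.indicator_of_notMem ha]

set_option maxHeartbeats 1000000 in
/-- If a quasi-linear map `Ω` on `L_p(μ)` with quasi-linearity constant `Z`
is `c`-trivial on `L_p(A)` and `d`-trivial on `L_p(B)` for disjoint measurable sets `A`, `B`,
then it is `2(Z + c + d)`-trivial on `L_p(A ∪ B)`. -/
theorem trivialOnWith_union
    {α : Type*} [MeasurableSpace α] {μ : Measure α}
    {q : ℝ≥0∞} [Fact (1 ≤ q)] (hq : q ≠ ∞)
    {Y : Type*} [NormedAddCommGroup Y] [NormedSpace ℝ Y] [CompleteSpace Y]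
    (Ω : Lp ℝ q μ → Y)
    (hom : ∀ (c : ℝ) (x : Lp ℝ q μ), Ω (c • x) = c • Ω x)
    (Z : ℝ) (hZ0 : 0 ≤ Z)
    (hZ : ∀ x y : Lp ℝ q μ, ‖Ω (x + y) - Ω x - Ω y‖ ≤ Z * (‖x‖ + ‖y‖))
    {A B : Set α} (hA : MeasurableSet A) (hB : MeasurableSet B) (hAB : Disjoint A B)
    {c d : ℝ} (hc0 : 0 ≤ c) (hd0 : 0 ≤ d)
    (hc : TrivialOnWith Ω (LpSubspace q μ A) c)
    (hd : TrivialOnWith Ω (LpSubspace q μ B) d) :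
    TrivialOnWith Ω (LpSubspace q μ (A ∪ B)) (2 * (Z + c + d)) := by
  obtain ⟨LA, hLA⟩ := hc
  obtain ⟨LB, hLB⟩ := hd
  set ΦA : Lp ℝ q μ →ₗ[ℝ] LpSubspace q μ A :=
    (indLinear hA).codRestrict _ (indLinear_mem hA) with hΦA
  set ΦB : Lp ℝ q μ →ₗ[ℝ] LpSubspace q μ B :=
    (indLinear hB).codRestrict _ (indLinear_mem hB) with hΦB
  refine ⟨LA.comp (ΦA.comp (LpSubspace q μ (A ∪ B)).subtype) +
    LB.comp (ΦB.comp (LpSubspace q μ (A ∪ B)).subtype), ?_⟩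
  intro x
  set u : Lp ℝ q μ := indLinear hA (x : Lp ℝ q μ) with hu
  set v : Lp ℝ q μ := indLinear hB (x : Lp ℝ q μ) with hv
  have hxuv : (x : Lp ℝ q μ) = u + v := by
    apply Lp.ext
    filter_upwards [indLinear_coeFn hA (x : Lp ℝ q μ),
      indLinear_coeFn hB (x : Lp ℝ q μ),
      Lp.coeFn_add u v, x.2] with a h1 h2 h3 hx0
    rw [h3, Pi.add_apply, hu, hv, h1, h2]
    by_cases ha : a ∈ A
    · have hb : a ∉ B := fun hb => (hAB.ne_of_mem ha hb) rfl
      simp [Set.indicator_of_mem ha, Set.indicator_of_notMem hb]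
    · by_cases hb : a ∈ B
      · simp [Set.indicator_of_notMem ha, Set.indicator_of_mem hb]
      · have : a ∉ A ∪ B := fun h => h.elim ha hb
        simp [Set.indicator_of_notMem ha, Set.indicator_of_notMem hb, hx0 this]
  have hun : ‖u‖ ≤ ‖(x : Lp ℝ q μ)‖ := indLinear_norm_le hA _
  have hvn : ‖v‖ ≤ ‖(x : Lp ℝ q μ)‖ := indLinear_norm_le hB _
  have key : Ω (x : Lp ℝ q μ) -
      (LA.comp (ΦA.comp (LpSubspace q μ (A ∪ B)).subtype) +
        LB.comp (ΦB.comp (LpSubspace q μ (A ∪ B)).subtype)) x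
      = (Ω (u + v) - Ω u - Ω v) + (Ω u - LA (ΦA (x : Lp ℝ q μ)))
        + (Ω v - LB (ΦB (x : Lp ℝ q μ))) := by
    simp only [LinearMap.add_apply, LinearMap.comp_apply, Submodule.subtype_apply]
    rw [← hxuv]
    abel
  rw [key]
  have h1 : ‖Ω (u + v) - Ω u - Ω v‖ ≤ Z * (‖u‖ + ‖v‖) := hZ u v
  have h2 : ‖Ω u - LA (ΦA (x : Lp ℝ q μ))‖ ≤ c * ‖u‖ := hLA (ΦA (x : Lp ℝ q μ))
  have h3 : ‖Ω v - LB (ΦB (x : Lp ℝ q μ))‖ ≤ d * ‖v‖ := hLB (ΦB (x : Lp ℝ q μ))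
  calc ‖Ω (u + v) - Ω u - Ω v + (Ω u - LA (ΦA (x : Lp ℝ q μ)))
        + (Ω v - LB (ΦB (x : Lp ℝ q μ)))‖
      ≤ ‖Ω (u + v) - Ω u - Ω v + (Ω u - LA (ΦA (x : Lp ℝ q μ)))‖
        + ‖Ω v - LB (ΦB (x : Lp ℝ q μ))‖ := norm_add_le _ _
    _ ≤ ‖Ω (u + v) - Ω u - Ω v‖ + ‖Ω u - LA (ΦA (x : Lp ℝ q μ))‖
        + ‖Ω v - LB (ΦB (x : Lp ℝ q μ))‖ := by
        gcongr; exact norm_add_le _ _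
    _ ≤ Z * (‖u‖ + ‖v‖) + c * ‖u‖ + d * ‖v‖ := by gcongr
    _ ≤ 2 * (Z + c + d) * ‖(x : Lp ℝ q μ)‖ := by nlinarith [norm_nonneg u, norm_nonneg v]
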